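/- Let z be a point of the upper half-plane ℍ and let φ : [0,∞) → [0,∞] be measurable. Then ∫_ℍ φ(u(z,w)) dμ(w) = 4π ∫₀^∞ φ(u) du, where both sides are extended-real-valued Lebesgue integrals. -/

import Mathlib

open MeasureTheory
open scoped ENNReal

/-- `u(z,w) = |z − w|² / (4 Im z Im w)`. -/
noncomputable def hypu (z w : ℂ) : ℝ :=
  ‖z - w‖ ^ 2 / (4 * z.im * w.im)

noncomputable section HypAux

open Real Set

/-- Euclidean diameter-like radius of the hyperbolic circle `{w : u(i,w) = u}`. -/
noncomputable def hQ (u : ℝ) : ℝ := 2 * Real.sqrt (u ^ 2 + u)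

noncomputable def hQd (u : ℝ) : ℝ := (2 * u + 1) / Real.sqrt (u ^ 2 + u)

noncomputable def hD (p : ℝ × ℝ) : ℝ := 1 + 2 * p.1 - hQ p.1 * Real.cos p.2

noncomputable def hDu (p : ℝ × ℝ) : ℝ := 2 - hQd p.1 * Real.cos p.2

/-- The parametrization of the upper half-plane by `(u, θ)`. -/
noncomputable def hF (r c : ℝ) (p : ℝ × ℝ) : ℝ × ℝ :=
  (r - c * hQ p.1 * Real.sin p.2 * (hD p)⁻¹, c * (hD p)⁻¹)

/-- The derivative of `hF`. -/
noncomputable def hB (c : ℝ) (p : ℝ × ℝ) : ℝ × ℝ →L[ℝ] ℝ × ℝ :=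
  LinearMap.toContinuousLinearMap (Matrix.toLin (Module.Basis.finTwoProd ℝ) (Module.Basis.finTwoProd ℝ)
    !![c * Real.sin p.2 * (hQ p.1 * hDu p - hQd p.1 * hD p) / hD p ^ 2,
       c * hQ p.1 * (hQ p.1 * Real.sin p.2 ^ 2 - Real.cos p.2 * hD p) / hD p ^ 2;
       -(c * hDu p) / hD p ^ 2,
       -(c * hQ p.1 * Real.sin p.2) / hD p ^ 2])

lemma hsum_pos {u : ℝ} (hu : 0 < u) : 0 < u ^ 2 + u := by nlinarith

lemma hQ_pos {u : ℝ} (hu : 0 < u) : 0 < hQ u := by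
  have := Real.sqrt_pos.2 (hsum_pos hu)
  rw [hQ]; linarith

lemma hQ_sq {u : ℝ} (hu : 0 < u) : hQ u ^ 2 = 4 * (u ^ 2 + u) := by
  rw [hQ, mul_pow, Real.sq_sqrt (hsum_pos hu).le]; ring

lemma hQ_lt {u : ℝ} (hu : 0 < u) : hQ u < 1 + 2 * u := by
  nlinarith [hQ_sq hu, hQ_pos hu]

lemma hD_pos {p : ℝ × ℝ} (hu : 0 < p.1) : 0 < hD p := by
  have h1 := hQ_pos hu
  have h2 := hQ_lt hu
  have h3 := Real.cos_le_one p.2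
  have h4 := Real.neg_one_le_cos p.2
  rw [hD]
  nlinarith

lemma hQ_mul_hQd {u : ℝ} (hu : 0 < u) : hQ u * hQd u = 4 * u + 2 := by
  have h := Real.sqrt_pos.2 (hsum_pos hu)
  rw [hQ, hQd]
  field_simp
  ring

lemma hF_hasFDerivAt (r c : ℝ) {p : ℝ × ℝ} (hu : 0 < p.1) :
    HasFDerivAt (hF r c) (hB c p) p := by
  have hs0 : (0:ℝ) < p.1 ^ 2 + p.1 := hsum_pos hu
  have hsq : 0 < Real.sqrt (p.1 ^ 2 + p.1) := Real.sqrt_pos.2 hs0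
  have hd0 : hD p ≠ 0 := (hD_pos hu).ne'
  have hpoly : HasDerivAt (fun t : ℝ => t ^ 2 + t) (2 * p.1 + 1) p.1 := by
    simpa using ((hasDerivAt_pow 2 p.1).fun_add (hasDerivAt_id' p.1))
  have hsqrt := hpoly.sqrt hs0.ne'
  have hQ1 : HasDerivAt hQ (hQd p.1) p.1 := by
    have h2 := hsqrt.const_mul (2:ℝ)
    have : 2 * ((2 * p.1 + 1) / (2 * Real.sqrt (p.1 ^ 2 + p.1))) = hQd p.1 := by
      rw [hQd]; field_simp
    rw [← this]
    exact h2
  have hQf : HasFDerivAt (fun q : ℝ × ℝ => hQ q.1)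
      (hQd p.1 • ContinuousLinearMap.fst ℝ ℝ ℝ) p :=
    hQ1.comp_hasFDerivAt p hasFDerivAt_fst
  have hcos : HasFDerivAt (fun q : ℝ × ℝ => Real.cos q.2)
      ((-Real.sin p.2) • ContinuousLinearMap.snd ℝ ℝ ℝ) p :=
    (Real.hasDerivAt_cos p.2).comp_hasFDerivAt p hasFDerivAt_snd
  have hsin : HasFDerivAt (fun q : ℝ × ℝ => Real.sin q.2)
      ((Real.cos p.2) • ContinuousLinearMap.snd ℝ ℝ ℝ) p :=
    (Real.hasDerivAt_sin p.2).comp_hasFDerivAt p hasFDerivAt_snd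
  have h1 : HasFDerivAt (fun q : ℝ × ℝ => 1 + 2 * q.1)
      ((0 : ℝ × ℝ →L[ℝ] ℝ) + (2:ℝ) • ContinuousLinearMap.fst ℝ ℝ ℝ) p :=
    (hasFDerivAt_const (1:ℝ) p).add (hasFDerivAt_fst.const_mul (2:ℝ))
  have hDf : HasFDerivAt (fun q : ℝ × ℝ => 1 + 2 * q.1 - hQ q.1 * Real.cos q.2)
      (((0 : ℝ × ℝ →L[ℝ] ℝ) + (2:ℝ) • ContinuousLinearMap.fst ℝ ℝ ℝ) -
        ((fun q : ℝ × ℝ => hQ q.1) p • ((-Real.sin p.2) • ContinuousLinearMap.snd ℝ ℝ ℝ) +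
          (fun q : ℝ × ℝ => Real.cos q.2) p • (hQd p.1 • ContinuousLinearMap.fst ℝ ℝ ℝ))) p :=
    h1.sub (hQf.mul hcos)
  have hDinv := (hasDerivAt_inv hd0).comp_hasFDerivAt p hDf
  have hy := hDinv.const_mul c
  have hnum := (hQf.const_mul c).mul hsin
  have hx0 := hnum.mul hDinv
  have hx := (hasFDerivAt_const r p).sub hx0
  refine ((hx.prodMk hy).congr_fderiv ?_)
  rw [hB, Matrix.toLin_finTwoProd_toContinuousLinearMap]
  apply ContinuousLinearMap.ext
  intro v
  have hdd : hD p = 1 + 2 * p.1 - hQ p.1 * Real.cos p.2 := rfl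
  apply Prod.ext <;>
    · simp only [ContinuousLinearMap.prod_apply, ContinuousLinearMap.add_apply,
        ContinuousLinearMap.sub_apply, ContinuousLinearMap.smul_apply,
        ContinuousLinearMap.coe_fst', ContinuousLinearMap.coe_snd',
        ContinuousLinearMap.zero_apply, smul_eq_mul, hDu, ← hdd, Pi.mul_apply, Function.comp_apply]
      field_simp
      ring

lemma hB_det {c : ℝ} (hc : 0 < c) {p : ℝ × ℝ} (hu : 0 < p.1) :
    (hB c p).det = 2 * c ^ 2 / hD p ^ 2 := by
  have hd0 : hD p ≠ 0 := (hD_pos hu).ne'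
  have hq0 : hQ p.1 ≠ 0 := (hQ_pos hu).ne'
  have hqq := hQ_mul_hQd hu
  have hsc := Real.sin_sq_add_cos_sq p.2
  have hdd : hD p = 1 + 2 * p.1 - hQ p.1 * Real.cos p.2 := rfl
  rw [hB, LinearMap.det_toContinuousLinearMap, LinearMap.det_toLin, Matrix.det_fin_two_of]
  have e3 : hQ p.1 * hQd p.1 - 2 * hQ p.1 * Real.cos p.2 = 2 * hD p := by
    rw [hdd]; linear_combination hqq
  rw [hDu]
  field_simp
  linear_combination (hQ p.1*hQd p.1*hD p) * hsc + (hD p) * e3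

lemma hF_key (r c : ℝ) {p : ℝ × ℝ} (hu : 0 < p.1) :
    ((hF r c p).1 - r) ^ 2 + ((hF r c p).2 - c) ^ 2 = 4 * p.1 * c * (hF r c p).2 := by
  have hd0 : hD p ≠ 0 := (hD_pos hu).ne'
  have hq2 := hQ_sq hu
  have hsc := Real.sin_sq_add_cos_sq p.2
  have hdd : hD p = 1 + 2 * p.1 - hQ p.1 * Real.cos p.2 := rfl
  rw [hF]
  field_simp
  linear_combination (c^2*(hD p + (1+2*p.1-hQ p.1*Real.cos p.2) - 2 - 4*p.1)) * hdd
    + (c^2*(Real.sin p.2^2+Real.cos p.2^2)) * hq2 + (c^2*(4*p.1^2+4*p.1)) * hsc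

end HypAux


lemma hF_snd_pos {c : ℝ} (hc : 0 < c) (r : ℝ) {p : ℝ × ℝ} (hu : 0 < p.1) :
    0 < (hF r c p).2 := by
  simpa [hF] using mul_pos hc (inv_pos.2 (hD_pos hu))

lemma hF_hypu (z : ℂ) (hz : 0 < z.im) {p : ℝ × ℝ} (hu : 0 < p.1) :
    hypu z (((hF z.re z.im p).1 : ℂ) + ((hF z.re z.im p).2 : ℂ) * Complex.I) = p.1 := by
  set x := (hF z.re z.im p).1 with hx
  set y := (hF z.re z.im p).2 with hy
  have hypos : 0 < y := hF_snd_pos hz z.re hu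
  have hkey := hF_key z.re z.im hu
  rw [← hx, ← hy] at hkey
  rw [hypu]
  have hre : (z - (↑x + ↑y * Complex.I)).re = z.re - x := by simp
  have him : (z - (↑x + ↑y * Complex.I)).im = z.im - y := by simp
  have him2 : ((↑x + ↑y * Complex.I) : ℂ).im = y := by simp
  rw [Complex.sq_norm, Complex.normSq_apply, hre, him, him2, div_eq_iff (by positivity)]
  linear_combination hkey

lemma hF_injOn (z : ℂ) (hz : 0 < z.im) :
    Set.InjOn (hF z.re z.im) (Set.Ioi (0:ℝ) ×ˢ Set.Ioo 0 (2 * Real.pi)) := by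
  rintro p hp p' hp' h
  simp only [Set.mem_prod, Set.mem_Ioi, Set.mem_Ioo] at hp hp'
  have hu : 0 < p.1 := hp.1
  have hu' : 0 < p'.1 := hp'.1
  have h1 : p.1 = p'.1 := by
    rw [← hF_hypu z hz hu, ← hF_hypu z hz hu', h]
  have hdpos := hD_pos hu
  have hdpos' := hD_pos hu'
  have hq := hQ_pos hu
  have hsnd : z.im * (hD p)⁻¹ = z.im * (hD p')⁻¹ := by
    have h2 := congrArg Prod.snd h
    simpa [hF] using h2
  have hDeq : hD p = hD p' := by
    have h2 := mul_left_cancel₀ hz.ne' hsnd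
    exact inv_injective h2
  have hcos : Real.cos p.2 = Real.cos p'.2 := by
    have e : 1 + 2 * p.1 - hQ p.1 * Real.cos p.2
        = 1 + 2 * p'.1 - hQ p'.1 * Real.cos p'.2 := hDeq
    rw [← h1] at e
    have e2 : hQ p.1 * Real.cos p.2 = hQ p.1 * Real.cos p'.2 := by linarith
    exact mul_left_cancel₀ hq.ne' e2
  have hsin : Real.sin p.2 = Real.sin p'.2 := by
    have hfst : z.re - z.im * hQ p.1 * Real.sin p.2 * (hD p)⁻¹
        = z.re - z.im * hQ p'.1 * Real.sin p'.2 * (hD p')⁻¹ := by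
      have h2 := congrArg Prod.fst h
      simpa [hF] using h2
    rw [← h1, ← hDeq] at hfst
    have e2 : z.im * hQ p.1 * Real.sin p.2 * (hD p)⁻¹
        = z.im * hQ p.1 * Real.sin p'.2 * (hD p)⁻¹ := by linarith
    field_simp [hz.ne', hq.ne', hdpos.ne'] at e2
    exact e2
  have hangle : Real.cos (p.2 - p'.2) = 1 := by
    rw [Real.cos_sub, hcos, hsin]
    linear_combination Real.sin_sq_add_cos_sq p'.2
  have hb : p.2 - p'.2 = 0 := by
    refine (Real.cos_eq_one_iff_of_lt_of_lt ?_ ?_).1 hangle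
    · have h3 := hp.2.1; have h4 := hp'.2.2; linarith
    · have h3 := hp.2.2; have h4 := hp'.2.1; linarith
  exact Prod.ext h1 (by linarith)

lemma exists_angle {a b : ℝ} (h : a ^ 2 + b ^ 2 = 1) (hb : b ≠ 0) :
    ∃ θ ∈ Set.Ioo (0:ℝ) (2 * Real.pi), Real.cos θ = a ∧ Real.sin θ = b := by
  have hb2 : 0 < b ^ 2 := by positivity
  have ha1 : -1 ≤ a := by nlinarith
  have ha2 : a ≤ 1 := by nlinarith
  have ha2' : a < 1 := by nlinarith
  have hpi := Real.pi_pos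
  have h1a : 1 - a ^ 2 = b ^ 2 := by linarith
  rcases lt_or_gt_of_ne hb with hbneg | hbpos
  · refine ⟨2 * Real.pi - Real.arccos a,
      ⟨by nlinarith [Real.arccos_le_pi a], by nlinarith [Real.arccos_pos.2 ha2']⟩, ?_, ?_⟩
    · rw [Real.cos_sub, Real.cos_two_pi, Real.sin_two_pi, Real.cos_arccos ha1 ha2]; ring
    · rw [Real.sin_sub, Real.sin_two_pi, Real.cos_two_pi, Real.sin_arccos, h1a,
        Real.sqrt_sq_eq_abs, abs_of_neg hbneg]
      ring
  · refine ⟨Real.arccos a, ⟨Real.arccos_pos.2 ha2', by nlinarith [Real.arccos_le_pi a]⟩,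
      Real.cos_arccos ha1 ha2, ?_⟩
    rw [Real.sin_arccos, h1a, Real.sqrt_sq_eq_abs, abs_of_pos hbpos]

lemma hF_image (z : ℂ) (hz : 0 < z.im) :
    {w : ℝ × ℝ | 0 < w.2} \ {w : ℝ × ℝ | w.1 = z.re} ⊆
      hF z.re z.im '' (Set.Ioi (0:ℝ) ×ˢ Set.Ioo 0 (2 * Real.pi)) := by
  rintro ⟨w1, w2⟩ ⟨hw2, hw1⟩
  simp only [Set.mem_setOf_eq] at hw2 hw1
  set c := z.im with hc
  set r := z.re with hr
  have hcpos : 0 < c := hz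
  set u : ℝ := ((w1 - r) ^ 2 + (w2 - c) ^ 2) / (4 * c * w2) with hu_def
  have hw1' : w1 - r ≠ 0 := sub_ne_zero.mpr hw1
  have hu : 0 < u := by
    apply div_pos
    · have h1 : 0 < (w1 - r) ^ 2 := by positivity
      nlinarith [sq_nonneg (w2 - c)]
    · positivity
  have hueq : u * (4 * c * w2) = (w1 - r) ^ 2 + (w2 - c) ^ 2 := by
    rw [hu_def]; field_simp
  have hqpos : 0 < hQ u := hQ_pos hu
  have hq2 := hQ_sq hu
  have hab : ((1 + 2 * u - c / w2) / hQ u) ^ 2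
      + (-((w1 - r) * (c / w2)) / (c * hQ u)) ^ 2 = 1 := by
    have key : (1 + 2 * u - c / w2) ^ 2 + ((w1 - r) / w2) ^ 2 = hQ u ^ 2 := by
      field_simp
      linear_combination -w2 ^ 2 * hq2 - hueq
    have expand : ((1 + 2 * u - c / w2) / hQ u) ^ 2
        + (-((w1 - r) * (c / w2)) / (c * hQ u)) ^ 2
        = ((1 + 2 * u - c / w2) ^ 2 + ((w1 - r) / w2) ^ 2) / hQ u ^ 2 := by
      field_simp
    rw [expand, key]
    field_simp
  have hbne : -((w1 - r) * (c / w2)) / (c * hQ u) ≠ 0 := by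
    apply div_ne_zero
    · simp only [neg_ne_zero]
      exact mul_ne_zero hw1' (div_ne_zero hcpos.ne' hw2.ne')
    · exact mul_ne_zero hcpos.ne' hqpos.ne'
  obtain ⟨θ, hθmem, hcosθ, hsinθ⟩ := exists_angle hab hbne
  have hDval : hD (u, θ) = c / w2 := by
    show 1 + 2 * u - hQ u * Real.cos θ = c / w2
    rw [hcosθ]
    field_simp
    ring
  refine ⟨(u, θ), ⟨hu, hθmem⟩, ?_⟩
  have h2 : (hF r c (u, θ)).2 = w2 := by
    show c * (hD (u, θ))⁻¹ = w2
    rw [hDval]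
    field_simp
  have h1 : (hF r c (u, θ)).1 = w1 := by
    show r - c * hQ u * Real.sin θ * (hD (u, θ))⁻¹ = w1
    rw [hDval, hsinθ]
    field_simp
    ring
  exact Prod.ext h1 h2

lemma line_null (r : ℝ) : MeasureTheory.volume {w : ℝ × ℝ | w.1 = r} = 0 := by
  have h : {w : ℝ × ℝ | w.1 = r} = ({r} : Set ℝ) ×ˢ (Set.univ : Set ℝ) := by
    ext w; simp [Set.mem_prod, Prod.ext_iff, eq_comm]
  rw [h, MeasureTheory.Measure.volume_eq_prod, MeasureTheory.Measure.prod_prod]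
  simp

/-- For `z ∈ ℍ` and measurable `φ : [0,∞) → [0,∞]`,
`∫_ℍ φ(u(z,w)) dμ(w) = 4π ∫₀^∞ φ(u) du`, where `dμ = y⁻² dx dy` is the hyperbolic measure,
written in the coordinates `w = x + iy`. -/
theorem stmt5 (z : ℂ) (hz : 0 < z.im) (φ : ℝ → ℝ≥0∞) (hφ : Measurable φ) :
    (∫⁻ p in {p : ℝ × ℝ | 0 < p.2},
        φ (hypu z ((p.1 : ℂ) + (p.2 : ℂ) * Complex.I)) * ENNReal.ofReal ((p.2 ^ 2)⁻¹)) =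
      ENNReal.ofReal (4 * Real.pi) * ∫⁻ u in Set.Ioi (0:ℝ), φ u := by
  set S : Set (ℝ × ℝ) := Set.Ioi (0:ℝ) ×ˢ Set.Ioo 0 (2 * Real.pi) with hS_def
  have hSm : MeasurableSet S := measurableSet_Ioi.prod measurableSet_Ioo
  set g : ℝ × ℝ → ℝ≥0∞ :=
    fun w => φ (hypu z ((w.1 : ℂ) + (w.2 : ℂ) * Complex.I)) * ENNReal.ofReal ((w.2 ^ 2)⁻¹)
    with hg
  have hae : hF z.re z.im '' S =ᵐ[volume] {p : ℝ × ℝ | 0 < p.2} := by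
    rw [MeasureTheory.ae_eq_set]
    constructor
    · have hsub : hF z.re z.im '' S \ {p : ℝ × ℝ | 0 < p.2} = ∅ := by
        rw [Set.diff_eq_empty]
        rintro w ⟨p, hp, rfl⟩
        exact hF_snd_pos hz z.re hp.1
      rw [hsub]; simp
    · refine measure_mono_null ?_ (line_null z.re)
      intro w hw
      by_contra hne
      exact hw.2 (hF_image z hz ⟨hw.1, hne⟩)
  have step1 : (∫⁻ p in {p : ℝ × ℝ | 0 < p.2}, g p) = ∫⁻ p in hF z.re z.im '' S, g p :=
    (setLIntegral_congr hae).symm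
  have step2 : (∫⁻ p in hF z.re z.im '' S, g p)
      = ∫⁻ p in S, ENNReal.ofReal |(hB z.im p).det| * g (hF z.re z.im p) :=
    lintegral_image_eq_lintegral_abs_det_fderiv_mul volume hSm
      (fun p hp => (hF_hasFDerivAt z.re z.im hp.1).hasFDerivWithinAt)
      (hF_injOn z hz) g
  have step3 : (∫⁻ p in S, ENNReal.ofReal |(hB z.im p).det| * g (hF z.re z.im p))
      = ∫⁻ p in S, ENNReal.ofReal 2 * φ p.1 := by
    refine setLIntegral_congr_fun hSm (fun p hp => ?_)
    have hu : 0 < p.1 := hp.1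
    have hd := hD_pos hu
    rw [hB_det hz hu, hg]
    have hval : hypu z (((hF z.re z.im p).1 : ℂ) + ((hF z.re z.im p).2 : ℂ) * Complex.I)
        = p.1 := hF_hypu z hz hu
    simp only [hval]
    have hy2 : (hF z.re z.im p).2 = z.im * (hD p)⁻¹ := by simp [hF]
    rw [hy2, abs_of_pos (by positivity)]
    rw [mul_comm (φ p.1) _, ← mul_assoc, ← ENNReal.ofReal_mul (by positivity)]
    congr 2
    field_simp
  have step4 : (∫⁻ p in S, ENNReal.ofReal 2 * φ p.1)
      = ENNReal.ofReal (4 * Real.pi) * ∫⁻ u in Set.Ioi (0:ℝ), φ u := by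
    have hmeas : Measurable (fun p : ℝ × ℝ => ENNReal.ofReal 2 * φ p.1) :=
      (hφ.comp measurable_fst).const_mul _
    rw [hS_def, MeasureTheory.Measure.volume_eq_prod, ← MeasureTheory.Measure.prod_restrict,
      MeasureTheory.lintegral_prod _ hmeas.aemeasurable]
    have inner : ∀ x : ℝ, (∫⁻ _ in Set.Ioo (0:ℝ) (2 * Real.pi), ENNReal.ofReal 2 * φ x)
        = (ENNReal.ofReal 2 * φ x) * ENNReal.ofReal (2 * Real.pi) := by
      intro x
      rw [setLIntegral_const, Real.volume_Ioo]
      norm_num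
    simp_rw [inner]
    have rearr : ∀ x : ℝ, (ENNReal.ofReal 2 * φ x) * ENNReal.ofReal (2 * Real.pi)
        = ENNReal.ofReal (4 * Real.pi) * φ x := by
      intro x
      rw [mul_right_comm, ← ENNReal.ofReal_mul (by norm_num)]
      congr 2
      ring
    simp_rw [rearr]
    rw [lintegral_const_mul _ hφ]
  rw [step1, step2, step3, step4]
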